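/- Let (S, d) be a metric space, A ⊆ S nonempty, and (A_N) a decreasing sequence of subsets with A ⊆ A_{N+1} ⊆ A_N ⊆ A_1 for all N, such that there are ε_N → 0 with every point of A_N within distance ε_N of A. Let f : S → ℝ be bounded on A_1 and satisfy: for every ε > 0 there is δ > 0 such that |f(s) − f(t)| < ε whenever s ∈ A_1 \ interior(A), t ∈ A_1 and d(s, t) < δ. Let (f_N) be a sequence of functions, bounded on A_1, with sup_{s ∈ A_1} |f_N(s) − f(s)| → 0. Then sup_{s ∈ A_N} f_N(s) → sup_{t ∈ A} f(t) as N → ∞. (Paper: Lemma A.3 (lem:ConvergenceMaxima), part (iv).) -/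

import Mathlib

open Filter

/-- Lemma A.3 (lem:ConvergenceMaxima), part (iv). -/
theorem sup_tendsto_of_shrinking_sets_and_uniform_convergence {S : Type*} [MetricSpace S]
    (A : Set S) (hA : A.Nonempty) (Aseq : ℕ → Set S)
    (hdec : ∀ N, Aseq (N + 1) ⊆ Aseq N) (hsub : ∀ N, A ⊆ Aseq N)
    (ε : ℕ → ℝ) (hε : Tendsto ε atTop (nhds 0))
    (hclose : ∀ N, ∀ s ∈ Aseq N, ∃ t ∈ A, dist s t ≤ ε N)
    (f : S → ℝ) (hbd : ∃ M, ∀ s ∈ Aseq 0, |f s| ≤ M)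
    (hcont : ∀ e > 0, ∃ δ > 0, ∀ s ∈ Aseq 0 \ interior A, ∀ t ∈ Aseq 0,
      dist s t < δ → |f s - f t| < e)
    (fN : ℕ → S → ℝ) (hfNbd : ∀ N, ∃ M, ∀ s ∈ Aseq 0, |fN N s| ≤ M)
    (hunif : ∀ e > 0, ∃ N₀, ∀ N ≥ N₀, ∀ s ∈ Aseq 0, |fN N s - f s| ≤ e) :
    Tendsto (fun N => sSup (fN N '' Aseq N)) atTop (nhds (sSup (f '' A))) := by
  have hmono : ∀ N, Aseq N ⊆ Aseq 0 := by
    intro N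
    induction N with
    | zero => exact fun x hx => hx
    | succ n ih => exact fun x hx => ih (hdec n hx)
  obtain ⟨M, hM⟩ := hbd
  have hAne : ∀ N, (Aseq N).Nonempty := fun N => hA.mono (hsub N)
  have hbddf : ∀ N, BddAbove (f '' Aseq N) := by
    intro N
    exact ⟨M, fun y ⟨x, hx, hxy⟩ => hxy ▸ (abs_le.mp (hM x (hmono N hx))).2⟩
  have hbddA : BddAbove (f '' A) :=
    ⟨M, fun y ⟨x, hx, hxy⟩ => hxy ▸ (abs_le.mp (hM x (hsub 0 hx))).2⟩
  rw [Metric.tendsto_atTop]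
  intro e he
  have he3 : 0 < e / 3 := by linarith
  obtain ⟨δ, hδ, hδprop⟩ := hcont (e / 3) he3
  obtain ⟨N₁, hN₁⟩ := Metric.tendsto_atTop.mp hε δ hδ
  obtain ⟨N₂, hN₂⟩ := hunif (e / 3) he3
  refine ⟨max N₁ N₂, fun N hN => ?_⟩
  have hN1 := hN₁ N (le_trans (le_max_left _ _) hN)
  have hN2 := hN₂ N (le_trans (le_max_right _ _) hN)
  rw [Real.dist_eq, sub_zero] at hN1
  obtain ⟨MN, hMN⟩ := hfNbd N
  have hbddfN : BddAbove (fN N '' Aseq N) :=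
    ⟨MN, fun y ⟨x, hx, hxy⟩ => hxy ▸ (abs_le.mp (hMN x (hmono N hx))).2⟩
  have claimA : sSup (f '' A) ≤ sSup (f '' Aseq N) :=
    csSup_le_csSup (hbddf N) (hA.image f) (Set.image_mono (hsub N))
  have claimB : sSup (f '' Aseq N) ≤ sSup (f '' A) + e / 3 := by
    apply csSup_le ((hAne N).image f)
    rintro y ⟨s, hs, rfl⟩
    by_cases hsi : s ∈ interior A
    · have h1 : f s ≤ sSup (f '' A) := le_csSup hbddA ⟨s, interior_subset hsi, rfl⟩
      linarith
    · obtain ⟨t, ht, hdist⟩ := hclose N s hs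
      have hlt : dist s t < δ := lt_of_le_of_lt hdist (lt_of_le_of_lt (le_abs_self _) hN1)
      have h2 := abs_lt.mp (hδprop s ⟨hmono N hs, hsi⟩ t (hsub 0 ht) hlt)
      have hft : f t ≤ sSup (f '' A) := le_csSup hbddA ⟨t, ht, rfl⟩
      linarith [h2.2]
  have claimC1 : sSup (fN N '' Aseq N) ≤ sSup (f '' Aseq N) + e / 3 := by
    apply csSup_le ((hAne N).image _)
    rintro y ⟨s, hs, rfl⟩
    have h1 := abs_le.mp (hN2 s (hmono N hs))
    have h2 : f s ≤ sSup (f '' Aseq N) := le_csSup (hbddf N) ⟨s, hs, rfl⟩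
    linarith [h1.2]
  have claimC2 : sSup (f '' Aseq N) ≤ sSup (fN N '' Aseq N) + e / 3 := by
    apply csSup_le ((hAne N).image _)
    rintro y ⟨s, hs, rfl⟩
    have h1 := abs_le.mp (hN2 s (hmono N hs))
    have h2 : fN N s ≤ sSup (fN N '' Aseq N) := le_csSup hbddfN ⟨s, hs, rfl⟩
    linarith [h1.1]
  rw [Real.dist_eq, abs_lt]
  constructor <;> linarith
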